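/- Let ℓ : X × Y → [0,∞) be L-Lipschitz in its second argument with respect to c(y,y') = κ·1(y≠y') on a finite label set Y, p ≥ 1, ε > 0, and let P be any conditional reference distribution on Y. Define F(γ) = γε^p + E_{(X,Ỹ)}[ E_{Y∼P}[ max_{y'∈Y}( ℓ(X,y') − γ c^p(y',Y) ) ] ]. Then any minimizer γ* of F over [0,∞) satisfies γ* ≤ L·ε^{−(p−1)}. -/

import Mathlib

open MeasureTheory

theorem optimal_lagrange_multiplier_bound {X Y : Type*} [Fintype Y] [DecidableEq Y] [Nonempty Y]
    {Ω : Type*} [MeasurableSpace Ω] (μ : Measure Ω) [IsProbabilityMeasure μ]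
    (ℓ : X → Y → ℝ) (L κ ε p : ℝ) (hL : 0 ≤ L) (hκ : 0 < κ) (hε : 0 < ε) (hp : 1 ≤ p)
    (hnonneg : ∀ x y, 0 ≤ ℓ x y)
    (hlip : ∀ x y₁ y₂, |ℓ x y₁ - ℓ x y₂| ≤ L * (κ * if y₁ = y₂ then 0 else 1))
    (Xf : Ω → X) (P : Ω → Y → ℝ) (hP : ∀ ω y, 0 ≤ P ω y) (hPsum : ∀ ω, ∑ y, P ω y = 1)
    (F : ℝ → ℝ)
    (hF : ∀ γ : ℝ, F γ = γ * ε ^ p +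
      ∫ ω, (∑ y, P ω y * (Finset.univ.sup' Finset.univ_nonempty
        fun y' => ℓ (Xf ω) y' - γ * (κ * if y' = y then 0 else 1) ^ p)) ∂μ)
    (hint : ∀ γ : ℝ, 0 ≤ γ →
      Integrable (fun ω => ∑ y, P ω y * (Finset.univ.sup' Finset.univ_nonempty
        fun y' => ℓ (Xf ω) y' - γ * (κ * if y' = y then 0 else 1) ^ p)) μ)
    (γs : ℝ) (hγs : 0 ≤ γs) (hmin : ∀ γ : ℝ, 0 ≤ γ → F γs ≤ F γ) :
    γs ≤ L * ε ^ (-(p - 1)) := by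
  have hp0 : p ≠ 0 := by intro h; rw [h] at hp; linarith
  have hεp : (0:ℝ) < ε ^ p := Real.rpow_pos_of_pos hε p
  have hκp : (0:ℝ) < κ ^ p := Real.rpow_pos_of_pos hκ p
  have hcost : ∀ y' y : Y, (κ * if y' = y then (0:ℝ) else 1) ^ p
      = if y' = y then 0 else κ ^ p := by
    intro y' y
    by_cases h : y' = y <;> simp [h, Real.zero_rpow hp0]
  -- pointwise bounds on the sup'
  have hsup_lb : ∀ (γ : ℝ) (x : X) (y : Y),
      ℓ x y ≤ Finset.univ.sup' Finset.univ_nonempty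
        (fun y' => ℓ x y' - γ * (κ * if y' = y then (0:ℝ) else 1) ^ p) := by
    intro γ x y
    have h := Finset.le_sup' (f := fun y' => ℓ x y' - γ * (κ * if y' = y then (0:ℝ) else 1) ^ p)
      (Finset.mem_univ y)
    have he : ℓ x y - γ * (κ * if y = y then (0:ℝ) else 1) ^ p = ℓ x y := by
      simp [Real.zero_rpow hp0]
    rw [he] at h
    exact h
  have hsup_ub : ∀ (γ : ℝ) (x : X) (y : Y),
      Finset.univ.sup' Finset.univ_nonempty
        (fun y' => ℓ x y' - γ * (κ * if y' = y then (0:ℝ) else 1) ^ p)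
        ≤ ℓ x y + max 0 (L * κ - γ * κ ^ p) := by
    intro γ x y
    apply Finset.sup'_le
    intro y' _
    rw [hcost]
    by_cases h : y' = y
    · simp [h]
    · have h1 := (abs_le.mp (hlip x y' y)).2
      simp [h] at h1 ⊢
      have h2 := le_max_right 0 (L * κ - γ * κ ^ p)
      linarith
  -- bounds on the sums
  set g : Ω → ℝ := fun ω => ∑ y, P ω y * ℓ (Xf ω) y with hg
  have hsum_lb : ∀ (γ : ℝ) (ω : Ω),
      g ω ≤ ∑ y, P ω y * (Finset.univ.sup' Finset.univ_nonempty
        fun y' => ℓ (Xf ω) y' - γ * (κ * if y' = y then 0 else 1) ^ p) := by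
    intro γ ω
    apply Finset.sum_le_sum
    intro y _
    exact mul_le_mul_of_nonneg_left (hsup_lb γ (Xf ω) y) (hP ω y)
  have hsum_ub : ∀ (γ : ℝ) (ω : Ω),
      (∑ y, P ω y * (Finset.univ.sup' Finset.univ_nonempty
        fun y' => ℓ (Xf ω) y' - γ * (κ * if y' = y then 0 else 1) ^ p))
        ≤ g ω + max 0 (L * κ - γ * κ ^ p) := by
    intro γ ω
    have h1 : (∑ y, P ω y * (Finset.univ.sup' Finset.univ_nonempty
        fun y' => ℓ (Xf ω) y' - γ * (κ * if y' = y then 0 else 1) ^ p))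
        ≤ ∑ y, P ω y * (ℓ (Xf ω) y + max 0 (L * κ - γ * κ ^ p)) := by
      apply Finset.sum_le_sum
      intro y _
      exact mul_le_mul_of_nonneg_left (hsup_ub γ (Xf ω) y) (hP ω y)
    calc _ ≤ ∑ y, P ω y * (ℓ (Xf ω) y + max 0 (L * κ - γ * κ ^ p)) := h1
      _ = g ω + (∑ y, P ω y) * max 0 (L * κ - γ * κ ^ p) := by
          simp [hg, mul_add, Finset.sum_add_distrib, Finset.sum_mul]
      _ = g ω + max 0 (L * κ - γ * κ ^ p) := by rw [hPsum ω, one_mul]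
  -- the special point γ₀ = L * κ ^ (1 - p)
  set γ₀ : ℝ := L * κ ^ (1 - p) with hγ₀
  have hγ₀nn : 0 ≤ γ₀ := mul_nonneg hL (Real.rpow_pos_of_pos hκ _).le
  have hγ₀κ : γ₀ * κ ^ p = L * κ := by
    rw [hγ₀, mul_assoc, ← Real.rpow_add hκ]
    norm_num
  -- at γ₀ the integrand equals g
  have hEq : (fun ω => ∑ y, P ω y * (Finset.univ.sup' Finset.univ_nonempty
      fun y' => ℓ (Xf ω) y' - γ₀ * (κ * if y' = y then 0 else 1) ^ p)) = g := by
    funext ω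
    have h1 := hsum_lb γ₀ ω
    have h2 := hsum_ub γ₀ ω
    rw [hγ₀κ] at h2
    have hm : max 0 (L * κ - L * κ) = 0 := by simp
    rw [hm, add_zero] at h2
    exact le_antisymm h2 h1
  have hgInt : Integrable g μ := hEq ▸ hint γ₀ hγ₀nn
  have hFγ₀ : F γ₀ = γ₀ * ε ^ p + ∫ ω, g ω ∂μ := by
    rw [hF γ₀]
    congr 1
    exact congrArg (fun f => ∫ ω, f ω ∂μ) hEq
  -- lower bound on F γs
  have hFlb : γs * ε ^ p + ∫ ω, g ω ∂μ ≤ F γs := by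
    rw [hF γs]
    exact add_le_add le_rfl (integral_mono hgInt (hint γs hγs) (hsum_lb γs))
  rw [neg_sub]
  rcases le_total ε κ with hεκ | hκε
  · -- use γ₀ : γs ≤ γ₀ ≤ L * ε ^ (1 - p)
    have h1 := hmin γ₀ hγ₀nn
    have h2 : γs * ε ^ p ≤ γ₀ * ε ^ p := by
      have := hFlb.trans (h1.trans_eq hFγ₀)
      linarith
    have h3 : γs ≤ γ₀ := le_of_mul_le_mul_right h2 hεp
    have h4 : κ ^ (1 - p) ≤ ε ^ (1 - p) :=
      Real.rpow_le_rpow_of_nonpos hε hεκ (by linarith)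
    calc γs ≤ γ₀ := h3
      _ ≤ L * ε ^ (1 - p) := mul_le_mul_of_nonneg_left h4 hL
  · -- use γ = 0
    have h0 : F 0 ≤ ∫ ω, g ω ∂μ + L * κ := by
      rw [hF 0, zero_mul, zero_add]
      have hInt2 : Integrable (fun ω => g ω + max 0 (L * κ - 0 * κ ^ p)) μ :=
        hgInt.add (integrable_const _)
      calc _ ≤ ∫ ω, (g ω + max 0 (L * κ - 0 * κ ^ p)) ∂μ :=
            integral_mono (hint 0 le_rfl) hInt2 (hsum_ub 0)
        _ = ∫ ω, g ω ∂μ + max 0 (L * κ - 0 * κ ^ p) := by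
            rw [integral_add hgInt (integrable_const _), integral_const]
            simp
        _ ≤ ∫ ω, g ω ∂μ + L * κ := by
            have : max 0 (L * κ - 0 * κ ^ p) ≤ L * κ := by
              rw [zero_mul, sub_zero]
              exact max_le (mul_nonneg hL hκ.le) le_rfl
            linarith
    have h1 := (hFlb.trans (hmin 0 le_rfl)).trans h0
    have h2 : γs * ε ^ p ≤ L * κ := by linarith
    have h3 : L * κ ≤ L * ε ^ (1 - p) * ε ^ p := by
      rw [mul_assoc, ← Real.rpow_add hε]
      norm_num
      exact mul_le_mul_of_nonneg_left hκε hL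
    exact le_of_mul_le_mul_right (h2.trans h3) hεp
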